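/- Let r ≥ 2, let (n,χ) be an l-colored complete graph, let s be the maximum size of a χ-homogeneous subset of [n], let A ⊆ [n] be χ-homogeneous with |A| = s - (4r-4), let B ⊆ [n] be χ-homogeneous with A < B (every element of A less than every element of B), and suppose |A| ≥ 2r and |B| ≥ 6r. Then (n,χ) contains an r-rich coloring. -/
import Mathlib


/-- A (directed representation of an) edge: a pair of vertices `p` with `p.1 < p.2`. -/
abbrev Edge (n : ℕ) := {p : Fin n × Fin n // p.1 < p.2}

/-- An edge-`C`-colored complete graph: a number of vertices together with a coloring
of all edges by elements of `C`. -/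
abbrev Coloring (C : Type) := (n : ℕ) × (Edge n → C)

/-- Build an edge from natural numbers `i < j < n`. -/
def mkE {n : ℕ} (i j : ℕ) (hij : i < j) (hj : j < n) : Edge n :=
  ⟨(⟨i, lt_trans hij hj⟩, ⟨j, hj⟩), Fin.mk_lt_mk.mpr hij⟩

/-- The image of an edge under a strictly increasing vertex map. -/
def edgeMap {a b : ℕ} (f : Fin a → Fin b) (hf : StrictMono f) (e : Edge a) : Edge b :=
  ⟨(f e.1.1, f e.1.2), hf e.2⟩

/-- Containment of colorings: `K ⪯ L` via a strictly increasing vertex map that sends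
the color of each edge to a `le`-larger color. -/
def ColLe {C : Type} (le : C → C → Prop) (K L : Coloring C) : Prop :=
  ∃ f : Fin K.1 → Fin L.1, ∃ hf : StrictMono f,
    ∀ e : Edge K.1, le (K.2 e) (L.2 (edgeMap f hf e))

/-- A lower ideal of colorings. -/
def IsIdeal {C : Type} (le : C → C → Prop) (X : Set (Coloring C)) : Prop :=
  ∀ K L : Coloring C, ColLe le K L → L ∈ X → K ∈ X

/-- The reversal of an edge under the order-reversing permutation of the vertices. -/
def revE {n : ℕ} (e : Edge n) : Edge n :=
  ⟨(e.1.2.rev, e.1.1.rev), Fin.rev_lt_rev.mpr e.2⟩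

/-- The reversal of a coloring. -/
def revC {n : ℕ} {C : Type} (χ : Edge n → C) : Edge n → C := fun e => χ (revE e)

/-- A coloring on `2r-1` vertices is of type 1 (0-indexed version of:
`χ({i,i+1}) = a` for `1 ≤ i ≤ r-1` and `χ({r,r+1}) = b` for two distinct colors). -/
def Type1 {C : Type} (r : ℕ) (χ : Edge (2 * r - 1) → C) : Prop :=
  ∃ a b : C, a ≠ b ∧
    (∀ (t : ℕ) (h : t + 2 ≤ r), χ (mkE t (t + 1) (by omega) (by omega)) = a) ∧
    (∀ h : r < 2 * r - 1, χ (mkE (r - 1) r (by omega) h) = b)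

/-- A coloring on `2r-1` vertices is of type 2 (0-indexed version of:
`χ({1,i}) = a` for `2 ≤ i ≤ r` and `χ({1,r+1}) = b` for two distinct colors). -/
def Type2 {C : Type} (r : ℕ) (χ : Edge (2 * r - 1) → C) : Prop :=
  ∃ a b : C, a ≠ b ∧
    (∀ (t : ℕ) (h1 : 1 ≤ t) (h2 : t ≤ r - 1), χ (mkE 0 t (by omega) (by omega)) = a) ∧
    (∀ h : r < 2 * r - 1, χ (mkE 0 r (by omega) h) = b)

/-- An `r`-rich coloring: on `2r-1` vertices, of type 1 or type 2, in it or its reversal. -/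
def Rich {C : Type} (r : ℕ) (χ : Edge (2 * r - 1) → C) : Prop :=
  Type1 r χ ∨ Type1 r (revC χ) ∨ Type2 r χ ∨ Type2 r (revC χ)

/-- `(n,χ)` contains an `r`-rich coloring (with respect to discrete containment). -/
def ContainsRich {C : Type} {n : ℕ} (r : ℕ) (χ : Edge n → C) : Prop :=
  ∃ χ' : Edge (2 * r - 1) → C, Rich r χ' ∧
    ∃ f : Fin (2 * r - 1) → Fin n, ∃ hf : StrictMono f,
      ∀ e : Edge (2 * r - 1), χ' e = χ (edgeMap f hf e)

/-- A set `S` of vertices is `χ`-homogeneous: all edges inside `S` have the same color. -/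
def Homog {n l : ℕ} (χ : Edge n → Fin l) (S : Finset (Fin n)) : Prop :=
  ∀ i ∈ S, ∀ j ∈ S, ∀ i' ∈ S, ∀ j' ∈ S, ∀ (h : i < j) (h' : i' < j'),
    χ ⟨(i, j), h⟩ = χ ⟨(i', j'), h'⟩

lemma edge_ext {n : ℕ} (e e' : Edge n) (h1 : (e.1.1 : ℕ) = (e'.1.1 : ℕ))
    (h2 : (e.1.2 : ℕ) = (e'.1.2 : ℕ)) : e = e' :=
  Subtype.ext (Prod.ext (Fin.ext h1) (Fin.ext h2))

lemma rich_of_path {C : Type} {n : ℕ} {r : ℕ} (hr : 2 ≤ r) (χ : Edge n → C)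
    (w : Fin (2*r-1) → Fin n) (hw : StrictMono w) (a b : C) (hab : a ≠ b)
    (ha : ∀ (t : ℕ) (h : t + 2 ≤ r),
      χ (edgeMap w hw (mkE t (t+1) (by omega) (by omega))) = a)
    (hb : χ (edgeMap w hw (mkE (r-1) r (by omega) (by omega))) = b) :
    ContainsRich r χ :=
  ⟨fun e => χ (edgeMap w hw e), Or.inl ⟨a, b, hab, fun t h => ha t h, fun _ => hb⟩,
    w, hw, fun _ => rfl⟩

lemma rich_of_revpath {C : Type} {n : ℕ} {r : ℕ} (hr : 2 ≤ r) (χ : Edge n → C)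
    (w : Fin (2*r-1) → Fin n) (hw : StrictMono w) (a b : C) (hab : a ≠ b)
    (ha : ∀ (t : ℕ) (h : t + 2 ≤ r),
      χ (edgeMap w hw (mkE (2*r-3-t) (2*r-2-t) (by omega) (by omega))) = a)
    (hb : χ (edgeMap w hw (mkE (r-2) (r-1) (by omega) (by omega))) = b) :
    ContainsRich r χ := by
  refine ⟨fun e => χ (edgeMap w hw e), Or.inr (Or.inl ⟨a, b, hab, ?_, ?_⟩), w, hw, fun _ => rfl⟩
  · intro t h
    have hE : revE (mkE (n := 2*r-1) t (t+1) (by omega) (by omega))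
        = mkE (2*r-3-t) (2*r-2-t) (by omega) (by omega) := by
      apply edge_ext <;> simp [revE, mkE, Fin.val_rev] <;> omega
    exact (congrArg (fun e => χ (edgeMap w hw e)) hE).trans (ha t h)
  · intro h
    have hE : revE (mkE (n := 2*r-1) (r-1) r (by omega) (by omega))
        = mkE (r-2) (r-1) (by omega) (by omega) := by
      apply edge_ext <;> simp [revE, mkE, Fin.val_rev] <;> omega
    exact (congrArg (fun e => χ (edgeMap w hw e)) hE).trans hb

/-- Let `r ≥ 2`, `(n,χ)` an `[l]`-colored complete graph, `s` the maximum
size of a `χ`-homogeneous subset, `A` homogeneous with `|A| = s - (4r-4)`, `B`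
homogeneous with `A < B`, `|A| ≥ 2r` and `|B| ≥ 6r`. Then `(n,χ)` contains an `r`-rich
coloring. -/
theorem stmt_14 (l r n s : ℕ) (hr : 2 ≤ r) (χ : Edge n → Fin l)
    (hub : ∀ S : Finset (Fin n), Homog χ S → S.card ≤ s)
    (hex : ∃ S : Finset (Fin n), Homog χ S ∧ S.card = s)
    (A B : Finset (Fin n)) (hA : Homog χ A) (hAc : A.card = s - (4 * r - 4))
    (hB : Homog χ B) (hAB : ∀ a ∈ A, ∀ b ∈ B, a < b)
    (hA2 : 2 * r ≤ A.card) (hB6 : 6 * r ≤ B.card) :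
    ContainsRich r χ := by
  by_contra hcon
  have h0A : 0 < A.card := by omega
  have h1A : 1 < A.card := by omega
  have h0B : 0 < B.card := by omega
  have h1B : 1 < B.card := by omega
  set fA := A.orderEmbOfFin (rfl : A.card = A.card) with hfAdef
  set fB := B.orderEmbOfFin (rfl : B.card = B.card) with hfBdef
  have hfAmem : ∀ i, fA i ∈ A := fun i => A.orderEmbOfFin_mem rfl i
  have hfBmem : ∀ j, fB j ∈ B := fun j => B.orderEmbOfFin_mem rfl j
  have hABlt : ∀ (i : Fin A.card) (j : Fin B.card), fA i < fB j :=
    fun i j => hAB _ (hfAmem i) _ (hfBmem j)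
  set a := χ ⟨(fA ⟨0, h0A⟩, fA ⟨1, h1A⟩), fA.strictMono (Fin.mk_lt_mk.mpr one_pos)⟩ with hadef
  set b := χ ⟨(fB ⟨0, h0B⟩, fB ⟨1, h1B⟩), fB.strictMono (Fin.mk_lt_mk.mpr one_pos)⟩ with hbdef
  have hAcol : ∀ (u v : Fin n) (huv : u < v), u ∈ A → v ∈ A → χ ⟨(u, v), huv⟩ = a :=
    fun u v huv hu hv => hA u hu v hv _ (hfAmem ⟨0, h0A⟩) _ (hfAmem ⟨1, h1A⟩) huv
      (fA.strictMono (Fin.mk_lt_mk.mpr one_pos))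
  have hBcol : ∀ (u v : Fin n) (huv : u < v), u ∈ B → v ∈ B → χ ⟨(u, v), huv⟩ = b :=
    fun u v huv hu hv => hB u hu v hv _ (hfBmem ⟨0, h0B⟩) _ (hfBmem ⟨1, h1B⟩) huv
      (fB.strictMono (Fin.mk_lt_mk.mpr one_pos))
  have claim1 : ∀ (i : Fin A.card) (j : Fin B.card), r - 1 ≤ (i : ℕ) → (j : ℕ) + r ≤ B.card →
      χ ⟨(fA i, fB j), hABlt i j⟩ = a := by
    intro i j hi hj
    by_contra hne
    have hi2 : (i : ℕ) < A.card := i.2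
    have hj2 : (j : ℕ) < B.card := j.2
    set w : Fin (2*r-1) → Fin n := fun t =>
      if h : (t : ℕ) ≤ r - 1 then fA ⟨(i : ℕ) - (r-1) + t, by omega⟩
      else fB ⟨(j : ℕ) + t - r, by have := t.2; omega⟩ with hwdef
    have hwmono : StrictMono w := by
      intro t1 t2 h12
      have h12' : (t1 : ℕ) < (t2 : ℕ) := h12
      simp only [hwdef]
      by_cases hc1 : (t1 : ℕ) ≤ r - 1 <;> by_cases hc2 : (t2 : ℕ) ≤ r - 1
      · rw [dif_pos hc1, dif_pos hc2]
        exact fA.strictMono (Fin.mk_lt_mk.mpr (by omega))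
      · rw [dif_pos hc1, dif_neg hc2]; exact hABlt _ _
      · exact absurd h12' (by omega)
      · rw [dif_neg hc1, dif_neg hc2]
        exact fB.strictMono (Fin.mk_lt_mk.mpr (by omega))
    have hwA : ∀ (t : Fin (2*r-1)), (t : ℕ) ≤ r - 1 → w t ∈ A := by
      intro t ht; simp only [hwdef]; rw [dif_pos ht]; exact hfAmem _
    have hw1 : w ⟨r-1, by omega⟩ = fA i := by
      simp only [hwdef]
      rw [dif_pos (le_refl _)]
      exact congrArg fA (Fin.ext (by show (i:ℕ) - (r-1) + (r-1) = (i:ℕ); omega))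
    have hw2 : w ⟨r, by omega⟩ = fB j := by
      simp only [hwdef]
      rw [dif_neg (by omega)]
      exact congrArg fB (Fin.ext (by show (j:ℕ) + r - r = (j:ℕ); omega))
    have hedge : edgeMap w hwmono (mkE (r-1) r (by omega) (by omega))
        = (⟨(fA i, fB j), hABlt i j⟩ : Edge n) :=
      edge_ext _ _ (congrArg Fin.val hw1) (congrArg Fin.val hw2)
    refine hcon (rich_of_path hr χ w hwmono a _ (fun hh => hne hh.symm) ?_ (congrArg χ hedge))
    intro t h
    exact hAcol _ _ _ (hwA _ (by show t ≤ r - 1; omega)) (hwA _ (by show t + 1 ≤ r - 1; omega))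
  have claim2 : ∀ (i : Fin A.card) (j : Fin B.card), r - 2 ≤ (i : ℕ) → (j : ℕ) + r ≤ B.card →
      χ ⟨(fA i, fB j), hABlt i j⟩ = b := by
    intro i j hi hj
    by_contra hne
    have hi2 : (i : ℕ) < A.card := i.2
    have hj2 : (j : ℕ) < B.card := j.2
    set w : Fin (2*r-1) → Fin n := fun t =>
      if h : (t : ℕ) ≤ r - 2 then fA ⟨(i : ℕ) - (r-2) + t, by omega⟩
      else fB ⟨(j : ℕ) + t - (r-1), by have := t.2; omega⟩ with hwdef
    have hwmono : StrictMono w := by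
      intro t1 t2 h12
      have h12' : (t1 : ℕ) < (t2 : ℕ) := h12
      simp only [hwdef]
      by_cases hc1 : (t1 : ℕ) ≤ r - 2 <;> by_cases hc2 : (t2 : ℕ) ≤ r - 2
      · rw [dif_pos hc1, dif_pos hc2]
        exact fA.strictMono (Fin.mk_lt_mk.mpr (by omega))
      · rw [dif_pos hc1, dif_neg hc2]; exact hABlt _ _
      · exact absurd h12' (by omega)
      · rw [dif_neg hc1, dif_neg hc2]
        exact fB.strictMono (Fin.mk_lt_mk.mpr (by omega))
    have hwB : ∀ (t : Fin (2*r-1)), ¬ (t : ℕ) ≤ r - 2 → w t ∈ B := by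
      intro t ht; simp only [hwdef]; rw [dif_neg ht]; exact hfBmem _
    have hw1 : w ⟨r-2, by omega⟩ = fA i := by
      simp only [hwdef]
      rw [dif_pos (le_refl _)]
      exact congrArg fA (Fin.ext (by show (i:ℕ) - (r-2) + (r-2) = (i:ℕ); omega))
    have hw2 : w ⟨r-1, by omega⟩ = fB j := by
      simp only [hwdef]
      rw [dif_neg (by omega)]
      exact congrArg fB (Fin.ext (by show (j:ℕ) + (r-1) - (r-1) = (j:ℕ); omega))
    have hedge : edgeMap w hwmono (mkE (r-2) (r-1) (by omega) (by omega))
        = (⟨(fA i, fB j), hABlt i j⟩ : Edge n) :=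
      edge_ext _ _ (congrArg Fin.val hw1) (congrArg Fin.val hw2)
    refine hcon (rich_of_revpath hr χ w hwmono b _ (fun hh => hne hh.symm) ?_ (congrArg χ hedge))
    intro t h
    exact hBcol _ _ _ (hwB _ (by show ¬ 2*r-3-t ≤ r - 2; omega))
      (hwB _ (by show ¬ 2*r-2-t ≤ r - 2; omega))
  have hiA : r - 1 < A.card := by omega
  have hab : a = b := by
    have e1 := claim1 ⟨r-1, hiA⟩ ⟨0, h0B⟩ (Nat.le_refl _) (show 0 + r ≤ B.card by omega)
    have e2 := claim2 ⟨r-1, hiA⟩ ⟨0, h0B⟩ (show r - 2 ≤ r - 1 by omega)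
      (show 0 + r ≤ B.card by omega)
    exact e1.symm.trans e2
  have hjB : B.card - r < B.card := by omega
  set imin : Fin A.card := ⟨r-1, hiA⟩ with himin
  set jmax : Fin B.card := ⟨B.card - r, hjB⟩ with hjmax
  set S : Finset (Fin n) :=
    (Finset.Ici imin).image fA ∪ (Finset.Iic jmax).image fB with hSdef
  have hScol : ∀ (u v : Fin n) (huv : u < v), u ∈ S → v ∈ S → χ ⟨(u, v), huv⟩ = a := by
    intro u v huv hu hv
    simp only [hSdef, Finset.mem_union, Finset.mem_image, Finset.mem_Ici,
      Finset.mem_Iic] at hu hv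
    rcases hu with ⟨i1, hi1, rfl⟩ | ⟨j1, hj1, rfl⟩ <;>
      rcases hv with ⟨i2, hi2, rfl⟩ | ⟨j2, hj2, rfl⟩
    · exact hAcol _ _ huv (hfAmem _) (hfAmem _)
    · exact claim1 i1 j2 hi1 (by have h : (j2 : ℕ) ≤ B.card - r := hj2; have h2 : 6 * r ≤ B.card := hB6; have h3 : 2 ≤ r := hr; omega)
    · exact absurd (hABlt i2 j1) (lt_asymm huv)
    · exact (hBcol _ _ huv (hfBmem _) (hfBmem _)).trans hab.symm
  have hS : Homog χ S := by
    intro i hi j hj i' hi' j' hj' h h'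
    rw [hScol i j h hi hj, hScol i' j' h' hi' hj']
  have hdisj : Disjoint ((Finset.Ici imin).image fA) ((Finset.Iic jmax).image fB) := by
    rw [Finset.disjoint_left]
    rintro x hx1 hx2
    simp only [Finset.mem_image] at hx1 hx2
    obtain ⟨i1, -, rfl⟩ := hx1
    obtain ⟨j1, -, h⟩ := hx2
    exact absurd (hABlt i1 j1) (by rw [h]; exact lt_irrefl _)
  have hcard : S.card = (A.card - (r-1)) + ((B.card - r) + 1) := by
    rw [hSdef, Finset.card_union_of_disjoint hdisj,
      Finset.card_image_of_injective _ fA.injective,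
      Finset.card_image_of_injective _ fB.injective, Fin.card_Ici, Fin.card_Iic]
  have := hub S hS
  omega
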